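/- Let G be a tree (a connected acyclic simple graph) with at least 3 vertices. Then det(G) = det'(G). -/

import Mathlib

/-- `S` is a vertex determining set of `G`: the only automorphism of `G`
fixing every vertex of `S` is the identity. -/
def IsVertexDetSet {V : Type*} (G : SimpleGraph V) (S : Set V) : Prop :=
  ∀ φ : G ≃g G, (∀ v ∈ S, φ v = v) → ∀ w, φ w = w

/-- `T` is an edge determining set of `G`: `T` consists of edges of `G`, and the only
automorphism of `G` mapping each edge of `T` to itself (as an unordered pair) is the identity. -/
def IsEdgeDetSet {V : Type*} (G : SimpleGraph V) (T : Set (Sym2 V)) : Prop :=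
  T ⊆ G.edgeSet ∧ ∀ φ : G ≃g G, (∀ e ∈ T, Sym2.map φ e = e) → ∀ w, φ w = w

/-- The determining number `det(G)`: the minimum size of a vertex determining set. -/
noncomputable def detNum {V : Type*} (G : SimpleGraph V) : ℕ :=
  sInf {k | ∃ S : Finset V, S.card = k ∧ IsVertexDetSet G ↑S}

/-- The determining index `det'(G)`: the minimum size of an edge determining set. -/
noncomputable def detIndex {V : Type*} (G : SimpleGraph V) : ℕ :=
  sInf {k | ∃ T : Finset (Sym2 V), T.card = k ∧ IsEdgeDetSet G ↑T}

namespace DetAux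

open SimpleGraph Finset

variable {V : Type*}

/-- The "far side" of `v` as seen from `u` : vertices strictly closer to `v` than to `u`. -/
noncomputable def farSide [Fintype V] (G : SimpleGraph V) (u v : V) : Finset V :=
  @Finset.filter _ (fun x => G.dist x v < G.dist x u) (Classical.decPred _) Finset.univ

lemma mem_farSide [Fintype V] {G : SimpleGraph V} {u v x : V} :
    x ∈ farSide G u v ↔ G.dist x v < G.dist x u := by
  simp [farSide]

lemma self_not_mem_farSide [Fintype V] {G : SimpleGraph V} {u v : V} :
    u ∉ farSide G u v := by
  simp [mem_farSide, SimpleGraph.dist_self]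

lemma sym2_decomp (e : Sym2 V) : ∃ u v, e = s(u, v) := by
  induction e using Sym2.ind with
  | _ u v => exact ⟨u, v, rfl⟩

variable {G : SimpleGraph V}

/-- In a tree every path realizes the distance. -/
lemma tree_path_length (hconn : G.Connected) (hacyc : G.IsAcyclic)
    {x y : V} (p : G.Walk x y) (hp : p.IsPath) : p.length = G.dist x y := by
  classical
  obtain ⟨q, hq⟩ := hconn.exists_walk_length_eq_dist x y
  have huniq : (⟨p, hp⟩ : G.Path x y) = ⟨q.bypass, q.bypass_isPath⟩ :=
    SimpleGraph.isAcyclic_iff_path_unique.mp hacyc _ _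
  have hpq : p = q.bypass := congrArg Subtype.val huniq
  refine le_antisymm ?_ (SimpleGraph.dist_le p)
  rw [hpq]
  calc q.bypass.length ≤ q.length := q.length_bypass_le
    _ = G.dist x y := hq

lemma iso_dist (hconn : G.Connected) (φ : G ≃g G) (x y : V) :
    G.dist (φ x) (φ y) = G.dist x y := by
  have key : ∀ (ψ : G ≃g G) (a b : V), G.dist (ψ a) (ψ b) ≤ G.dist a b := by
    intro ψ a b
    obtain ⟨p, hp⟩ := hconn.exists_walk_length_eq_dist a b
    calc G.dist (ψ a) (ψ b) ≤ (p.map ψ.toHom).length := SimpleGraph.dist_le _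
      _ = p.length := p.length_map _
      _ = _ := hp
  refine le_antisymm (key φ x y) ?_
  have := key φ.symm (φ x) (φ y)
  simpa using this

lemma concat_isPath {x u v : V} {P : G.Walk x u} (hP : P.IsPath)
    (h : G.Adj u v) (hv : v ∉ P.support) : (P.concat h).IsPath := by
  rw [SimpleGraph.Walk.isPath_def] at hP ⊢
  rw [SimpleGraph.Walk.support_concat]
  refine List.Nodup.append hP (List.nodup_singleton v) ?_
  simpa [List.disjoint_singleton] using hv

/-- In a tree, the two endpoints of an edge are at different distances from any vertex. -/
lemma dist_ne_of_adj (hconn : G.Connected) (hacyc : G.IsAcyclic)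
    {u v : V} (huv : G.Adj u v) (x : V) : G.dist x u ≠ G.dist x v := by
  classical
  intro h
  obtain ⟨p, _⟩ := hconn.exists_walk_length_eq_dist x u
  set P := p.bypass with hPdef
  have hPpath : P.IsPath := p.bypass_isPath
  have hPlen : P.length = G.dist x u := tree_path_length hconn hacyc P hPpath
  have hvP : v ∉ P.support := by
    intro hv
    have h1 : G.dist x v ≤ (P.takeUntil v hv).length := SimpleGraph.dist_le _
    have h2 := congrArg SimpleGraph.Walk.length (P.take_spec hv)
    rw [SimpleGraph.Walk.length_append] at h2
    have h3 : (P.dropUntil v hv).length ≠ 0 := fun h0 =>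
      huv.ne (SimpleGraph.Walk.eq_of_length_eq_zero h0).symm
    omega
  have hP' : (P.concat huv).IsPath := concat_isPath hPpath huv hvP
  have := tree_path_length hconn hacyc (P.concat huv) hP'
  rw [SimpleGraph.Walk.length_concat] at this
  omega

/-- In a tree, at most one neighbour of `u` is closer to `x` than `u` is. -/
lemma closer_unique (hconn : G.Connected) (hacyc : G.IsAcyclic)
    {u w w' x : V} (h1 : G.Adj u w) (h2 : G.Adj u w') (hne : w ≠ w')
    (hw : G.dist x w < G.dist x u) (hw' : G.dist x w' < G.dist x u) : False := by
  classical
  have build : ∀ {t : V} (ht : G.Adj u t), G.dist x t < G.dist x u →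
      ∃ (Q : G.Walk x t), (Q.concat ht.symm).IsPath := by
    intro t ht hlt
    obtain ⟨p, _⟩ := hconn.exists_walk_length_eq_dist x t
    refine ⟨p.bypass, ?_⟩
    have hPpath : p.bypass.IsPath := p.bypass_isPath
    have hPlen : p.bypass.length = G.dist x t := tree_path_length hconn hacyc _ hPpath
    refine concat_isPath hPpath ht.symm ?_
    intro hu
    have hle : G.dist x u ≤ (p.bypass.takeUntil u hu).length := SimpleGraph.dist_le _
    have := SimpleGraph.Walk.length_takeUntil_le p.bypass hu
    omega
  obtain ⟨Q, hQ⟩ := build h1 hw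
  obtain ⟨Q', hQ'⟩ := build h2 hw'
  have huniq : (⟨Q.concat h1.symm, hQ⟩ : G.Path x u) = ⟨Q'.concat h2.symm, hQ'⟩ :=
    SimpleGraph.isAcyclic_iff_path_unique.mp hacyc _ _
  have heq : Q.concat h1.symm = Q'.concat h2.symm := congrArg Subtype.val huniq
  obtain ⟨hv, -⟩ := SimpleGraph.Walk.concat_inj heq
  exact hne hv

lemma farSide_card_iso [Fintype V] (hconn : G.Connected) (φ : G ≃g G) (u v : V) :
    (farSide G (φ u) (φ v)).card = (farSide G u v).card := by
  symm
  apply Finset.card_bij (fun x _ => φ x)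
  · intro a ha
    rw [mem_farSide] at ha ⊢
    rw [iso_dist hconn, iso_dist hconn]
    exact ha
  · intro a _ b _ h
    exact φ.injective h
  · intro b hb
    refine ⟨φ.symm b, ?_, φ.apply_symm_apply b⟩
    rw [mem_farSide] at hb ⊢
    have h1 := iso_dist hconn φ (φ.symm b) v
    have h2 := iso_dist hconn φ (φ.symm b) u
    rw [φ.apply_symm_apply] at h1 h2
    omega

lemma farSide_card_add [Fintype V] (hconn : G.Connected) (hacyc : G.IsAcyclic)
    {u v : V} (h : G.Adj u v) :
    (farSide G u v).card + (farSide G v u).card = Fintype.card V := by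
  classical
  have hdisj : Disjoint (farSide G u v) (farSide G v u) := by
    rw [Finset.disjoint_left]
    intro x hx hx'
    rw [mem_farSide] at hx hx'
    omega
  have hunion : farSide G u v ∪ farSide G v u = Finset.univ := by
    ext x
    simp only [Finset.mem_union, mem_farSide, Finset.mem_univ, iff_true]
    have := dist_ne_of_adj hconn hacyc h x
    omega
  rw [← Finset.card_union_of_disjoint hdisj, hunion, Finset.card_univ]

/-- Key lemma: if `φ` fixes `u`, `u ~ v`, and the far side of `v` has at least half the
vertices, then `φ` fixes `v`. -/
lemma key_fix [Fintype V] (hconn : G.Connected) (hacyc : G.IsAcyclic)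
    {u v : V} (h : G.Adj u v) (hbig : Fintype.card V ≤ 2 * (farSide G u v).card)
    (φ : G ≃g G) (hu : φ u = u) : φ v = v := by
  classical
  by_contra hne
  have hadj' : G.Adj u (φ v) := by
    have := (SimpleGraph.Iso.map_adj_iff φ).mpr h
    rwa [hu] at this
  have hcards : (farSide G u (φ v)).card = (farSide G u v).card := by
    have := farSide_card_iso hconn φ u v
    rwa [hu] at this
  have hdisj : Disjoint (farSide G u v) (farSide G u (φ v)) :=
    Finset.disjoint_left.mpr fun x hx hx' =>
      closer_unique hconn hacyc h hadj' (fun hvv => hne hvv.symm)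
        (mem_farSide.mp hx) (mem_farSide.mp hx')
  have hsub : farSide G u v ∪ farSide G u (φ v) ⊆ Finset.univ.erase u := by
    intro x hx
    rcases Finset.mem_union.mp hx with hx | hx <;>
      exact Finset.mem_erase.mpr ⟨fun hxu => by subst hxu; exact self_not_mem_farSide hx,
        Finset.mem_univ x⟩
  have hcard := Finset.card_le_card hsub
  rw [Finset.card_union_of_disjoint hdisj, Finset.card_erase_of_mem (Finset.mem_univ u),
    Finset.card_univ] at hcard
  have hpos : 0 < Fintype.card V := Fintype.card_pos_iff.mpr ⟨u⟩
  omega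

/-- If `φ` swaps the endpoints of an edge, that edge is balanced. -/
lemma swap_balanced [Fintype V] (hconn : G.Connected) (hacyc : G.IsAcyclic)
    {u v : V} (h : G.Adj u v) (φ : G ≃g G) (hu : φ u = v) (hv : φ v = u) :
    2 * (farSide G u v).card = Fintype.card V := by
  have h1 : (farSide G v u).card = (farSide G u v).card := by
    have := farSide_card_iso hconn φ u v
    rwa [hu, hv] at this
  have := farSide_card_add hconn hacyc h
  omega

lemma exists_neighbor (hconn : G.Connected) [Fintype V] (hcard : 2 ≤ Fintype.card V)
    (v : V) : ∃ w, G.Adj v w := by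
  have : Nontrivial V := Fintype.one_lt_card_iff_nontrivial.mp (by omega)
  obtain ⟨x, hx⟩ := exists_ne v
  obtain ⟨p⟩ := hconn v x
  obtain ⟨w, h, -, -⟩ := p.exists_eq_cons_of_ne (Ne.symm hx)
  exact ⟨w, h⟩

/-- Every vertex of a tree with at least 3 vertices has an incident unbalanced edge. -/
lemma exists_good_edge [Fintype V] (hconn : G.Connected) (hacyc : G.IsAcyclic)
    (hcard : 3 ≤ Fintype.card V) (v : V) :
    ∃ w, G.Adj v w ∧ 2 * (farSide G v w).card ≠ Fintype.card V := by
  classical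
  obtain ⟨w, hw⟩ := exists_neighbor hconn (by omega) v
  by_cases hbal : 2 * (farSide G v w).card ≠ Fintype.card V
  · exact ⟨w, hw, hbal⟩
  push_neg at hbal
  by_cases h2 : ∃ w', G.Adj v w' ∧ w' ≠ w
  · obtain ⟨w', hw', hne⟩ := h2
    refine ⟨w', hw', fun hbal' => ?_⟩
    have hdisj : Disjoint (farSide G v w) (farSide G v w') :=
      Finset.disjoint_left.mpr fun x hx hx' =>
        closer_unique hconn hacyc hw hw' hne.symm (mem_farSide.mp hx) (mem_farSide.mp hx')
    have hsub : farSide G v w ∪ farSide G v w' ⊆ Finset.univ.erase v := by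
      intro x hx
      rcases Finset.mem_union.mp hx with hx | hx <;>
        exact Finset.mem_erase.mpr ⟨fun hxv => by subst hxv; exact self_not_mem_farSide hx,
          Finset.mem_univ x⟩
    have hc := Finset.card_le_card hsub
    rw [Finset.card_union_of_disjoint hdisj, Finset.card_erase_of_mem (Finset.mem_univ v),
      Finset.card_univ] at hc
    omega
  · push_neg at h2
    exfalso
    have hsub : Finset.univ.erase v ⊆ farSide G v w := by
      intro x hx
      have hxv : x ≠ v := Finset.ne_of_mem_erase hx
      rw [mem_farSide]
      obtain ⟨p, _⟩ := hconn.exists_walk_length_eq_dist x v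
      have hPpath : p.bypass.IsPath := p.bypass_isPath
      have hPlen : p.bypass.length = G.dist x v := tree_path_length hconn hacyc _ hPpath
      obtain ⟨t, ht, q, hq⟩ := p.bypass.reverse.exists_eq_cons_of_ne (Ne.symm hxv)
      have htw : t = w := h2 t ht
      have hlq : q.length + 1 = p.bypass.length := by
        have := congrArg SimpleGraph.Walk.length hq
        simp only [SimpleGraph.Walk.length_reverse, SimpleGraph.Walk.length_cons] at this
        omega
      have hdw : G.dist x w ≤ q.length := by
        rw [← htw]
        calc G.dist x t ≤ q.reverse.length := SimpleGraph.dist_le _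
          _ = q.length := SimpleGraph.Walk.length_reverse q
      have hpos : 0 < G.dist x v := hconn.pos_dist_of_ne hxv
      omega
    have hc := Finset.card_le_card hsub
    rw [Finset.card_erase_of_mem (Finset.mem_univ v), Finset.card_univ] at hc
    omega

/-- Fixing an endpoint of a walk propagates along it when all edges are setwise fixed. -/
lemma fix_propagate (φ : G ≃g G)
    (hfix : ∀ a b : V, G.Adj a b → Sym2.map φ s(a, b) = s(a, b)) :
    ∀ {a b : V} (_ : G.Walk a b), φ a = a → φ b = b := by
  intro a b p
  induction p with
  | nil => exact id
  | @cons x y z h q ih =>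
    intro hx
    have hmap := hfix x y h
    rw [Sym2.map_pair_eq, Sym2.eq_iff] at hmap
    rcases hmap with ⟨-, h2⟩ | ⟨h1, -⟩
    · exact ih h2
    · exact absurd (h1.symm.trans hx) h.ne.symm

/-- A tree on at least 3 vertices has a vertex with two distinct neighbours. -/
lemma exists_two_neighbors [Fintype V] (hconn : G.Connected) (hacyc : G.IsAcyclic)
    (hcard : 3 ≤ Fintype.card V) :
    ∃ u w w' : V, w ≠ w' ∧ G.Adj u w ∧ G.Adj u w' := by
  classical
  have : Nontrivial V := Fintype.one_lt_card_iff_nontrivial.mp (by omega)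
  obtain ⟨v⟩ : Nonempty V := inferInstance
  obtain ⟨w, hw⟩ := exists_neighbor hconn (by omega) v
  have hex : ∃ x, x ∉ ({v, w} : Finset V) := by
    by_contra hx
    push_neg at hx
    have hsub : (Finset.univ : Finset V) ⊆ {v, w} := fun x _ => hx x
    have h1 := Finset.card_le_card hsub
    have h2 : ({v, w} : Finset V).card ≤ 2 :=
      le_trans (Finset.card_insert_le _ _) (by simp)
    rw [Finset.card_univ] at h1
    omega
  obtain ⟨x, hx⟩ := hex
  simp only [Finset.mem_insert, Finset.mem_singleton, not_or] at hx
  obtain ⟨hxv, hxw⟩ := hx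
  obtain ⟨p, -⟩ := hconn.exists_walk_length_eq_dist x v
  have hPpath : p.bypass.IsPath := p.bypass_isPath
  set P := p.bypass with hP
  clear_value P
  cases P with
  | nil => exact absurd rfl hxv
  | @cons _ t _ h q =>
    cases q with
    | nil => exact ⟨v, x, w, hxw, h.symm, hw⟩
    | @cons _ s _ h2 r =>
      refine ⟨t, x, s, ?_, h.symm, h2⟩
      intro hxs
      have hnodup := hPpath.support_nodup
      rw [SimpleGraph.Walk.support_cons, List.nodup_cons] at hnodup
      apply hnodup.1
      rw [SimpleGraph.Walk.support_cons, hxs]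
      exact List.mem_cons_of_mem t r.start_mem_support

/-- The set of all edges of a tree (with at least 3 vertices) is an edge determining set. -/
lemma allEdges_det [Fintype V] (hconn : G.Connected) (hacyc : G.IsAcyclic)
    (hcard : 3 ≤ Fintype.card V) :
    ∃ T : Finset (Sym2 V), IsEdgeDetSet G ↑T := by
  classical
  refine ⟨G.edgeFinset, ?_, ?_⟩
  · rw [SimpleGraph.coe_edgeFinset]
  · intro φ hφ w
    have hfix : ∀ a b : V, G.Adj a b → Sym2.map φ s(a, b) = s(a, b) := by
      intro a b hab
      exact hφ _ (by rw [Finset.mem_coe, SimpleGraph.mem_edgeFinset]; exact hab)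
    obtain ⟨u, w1, w2, hne, h1, h2⟩ := exists_two_neighbors hconn hacyc hcard
    have hu : φ u = u := by
      have hm1 := hfix u w1 h1
      have hm2 := hfix u w2 h2
      rw [Sym2.map_pair_eq, Sym2.eq_iff] at hm1 hm2
      rcases hm1 with ⟨ha, -⟩ | ⟨hb, hc⟩
      · exact ha
      · rcases hm2 with ⟨ha, -⟩ | ⟨hb', -⟩
        · exact ha
        · exact absurd (hb.symm.trans hb') hne
    obtain ⟨q⟩ := hconn u w
    exact fix_propagate φ hfix q hu

end DetAux

open DetAux Finset

theorem detNum_eq_detIndex_of_tree {V : Type*} [Fintype V] (G : SimpleGraph V)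
    (hconn : G.Connected) (hacyc : G.IsAcyclic) (hcard : 3 ≤ Fintype.card V) :
    detNum G = detIndex G := by
  classical
  have hnV : Nonempty V := Fintype.card_pos_iff.mp (by omega)
  set n := Fintype.card V with hn
  -- Direction 1 : detNum ≤ detIndex
  have hA : detNum G ≤ detIndex G := by
    have hne : {k | ∃ T : Finset (Sym2 V), T.card = k ∧ IsEdgeDetSet G ↑T}.Nonempty := by
      obtain ⟨T, hT⟩ := allEdges_det hconn hacyc hcard
      exact ⟨T.card, T, rfl, hT⟩
    have hmem : detIndex G ∈ {k | ∃ T : Finset (Sym2 V), T.card = k ∧ IsEdgeDetSet G ↑T} :=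
      Nat.sInf_mem hne
    obtain ⟨T, hTcard, hTsub, hTdet⟩ := hmem
    have hchoice : ∀ e ∈ T, ∃ p : V × V, e = s(p.1, p.2) ∧ G.Adj p.1 p.2 ∧
        n ≤ 2 * (farSide G p.1 p.2).card := by
      intro e he
      obtain ⟨u, v, rfl⟩ := sym2_decomp e
      have hadj : G.Adj u v := (SimpleGraph.mem_edgeSet _).mp (hTsub (Finset.mem_coe.mpr he))
      have hsum := farSide_card_add hconn hacyc hadj
      by_cases hbig : n ≤ 2 * (farSide G u v).card
      · exact ⟨(u, v), rfl, hadj, hbig⟩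
      · exact ⟨(v, u), Sym2.eq_swap, hadj.symm, show n ≤ 2 * (farSide G v u).card by omega⟩
    choose! f hf1 hf2 hf3 using hchoice
    set S : Finset V := T.image (fun e => (f e).1) with hS
    have hSdet : IsVertexDetSet G ↑S := by
      intro φ hφ w
      apply hTdet φ _ w
      intro e he
      have hu : φ (f e).1 = (f e).1 :=
        hφ _ (Finset.mem_coe.mpr (Finset.mem_image_of_mem _ he))
      have hv : φ (f e).2 = (f e).2 :=
        key_fix hconn hacyc (hf2 e he) (hf3 e he) φ hu
      rw [hf1 e he, Sym2.map_pair_eq, hu, hv]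
    calc detNum G ≤ S.card := Nat.sInf_le ⟨S, rfl, hSdet⟩
      _ ≤ T.card := Finset.card_image_le
      _ = detIndex G := hTcard
  -- Direction 2 : detIndex ≤ detNum
  have hB : detIndex G ≤ detNum G := by
    have hne : {k | ∃ S : Finset V, S.card = k ∧ IsVertexDetSet G ↑S}.Nonempty :=
      ⟨n, Finset.univ, Finset.card_univ, fun φ h w => h w (by simp)⟩
    have hmem : detNum G ∈ {k | ∃ S : Finset V, S.card = k ∧ IsVertexDetSet G ↑S} :=
      Nat.sInf_mem hne
    obtain ⟨S, hScard, hSdet⟩ := hmem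
    have h9 : ∀ v : V, ∃ w, G.Adj v w ∧ 2 * (farSide G v w).card ≠ n :=
      exists_good_edge hconn hacyc hcard
    choose g hg1 hg2 using h9
    set T : Finset (Sym2 V) := S.image (fun v => s(v, g v)) with hT
    have hTdet : IsEdgeDetSet G ↑T := by
      constructor
      · intro e he
        rw [Finset.mem_coe, hT, Finset.mem_image] at he
        obtain ⟨v, -, rfl⟩ := he
        exact (SimpleGraph.mem_edgeSet _).mpr (hg1 v)
      · intro φ hφ w
        apply hSdet φ _ w
        intro v hv
        have hfix := hφ s(v, g v)
          (Finset.mem_coe.mpr (Finset.mem_image_of_mem _ (Finset.mem_coe.mp hv)))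
        rw [Sym2.map_pair_eq, Sym2.eq_iff] at hfix
        rcases hfix with ⟨h1, -⟩ | ⟨h1, h2⟩
        · exact h1
        · exact absurd (swap_balanced hconn hacyc (hg1 v) φ h1 h2) (hg2 v)
    calc detIndex G ≤ T.card := Nat.sInf_le ⟨T, rfl, hTdet⟩
      _ ≤ S.card := Finset.card_image_le
      _ = detNum G := hScard
  omega
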